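/- For an integer p ≥ 3 with Θ_p defined as above, Θ_p is nondecreasing on ℝ and Θ_p(0) = (1/2)·log(p-1) > 0. -/

import Mathlib

open Real Set

private lemma glue_mono {f : ℝ → ℝ} {a b : ℝ} (hab : a ≤ b)
    (h1 : MonotoneOn f (Iic a)) (h2 : MonotoneOn f (Icc a b))
    (h3 : MonotoneOn f (Ici b)) : Monotone f := by
  intro x y hxy
  rcases le_total y a with hy | hy
  · exact h1 (mem_Iic.2 (hxy.trans hy)) (mem_Iic.2 hy) hxy
  rcases le_total b x with hx | hx
  · exact h3 (mem_Ici.2 hx) (mem_Ici.2 (hx.trans hxy)) hxy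
  rcases le_total x a with hxa | hxa
  · have h1' : f x ≤ f a := h1 (mem_Iic.2 hxa) self_mem_Iic hxa
    rcases le_total y b with hyb | hyb
    · exact h1'.trans (h2 ⟨le_rfl, hab⟩ ⟨hy, hyb⟩ hy)
    · exact h1'.trans ((h2 ⟨le_rfl, hab⟩ ⟨hab, le_rfl⟩ hab).trans
        (h3 self_mem_Ici (mem_Ici.2 hyb) hyb))
  · rcases le_total y b with hyb | hyb
    · exact h2 ⟨hxa, hx⟩ ⟨hy, hyb⟩ hxy
    · exact (h2 ⟨hxa, hx⟩ ⟨hab, le_rfl⟩ hx).trans (h3 self_mem_Ici (mem_Ici.2 hyb) hyb)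

theorem stmt_14 (p : ℕ) (hp : 3 ≤ p) :
    let Einf : ℝ := 2 * Real.sqrt (((p : ℝ) - 1) / p)
    let J : ℝ → ℝ := fun u =>
      -(u / Einf ^ 2) * Real.sqrt (u ^ 2 - Einf ^ 2)
        - Real.log (-u + Real.sqrt (u ^ 2 - Einf ^ 2)) + Real.log Einf
    let Θ : ℝ → ℝ := fun u =>
      if u ≤ -Einf then
        (1 / 2) * Real.log ((p : ℝ) - 1) - (((p : ℝ) - 2) / (4 * ((p : ℝ) - 1))) * u ^ 2 - J u
      else if u ≤ 0 then
        (1 / 2) * Real.log ((p : ℝ) - 1) - (((p : ℝ) - 2) / (4 * ((p : ℝ) - 1))) * u ^ 2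
      else (1 / 2) * Real.log ((p : ℝ) - 1)
    Monotone Θ ∧ Θ 0 = (1 / 2) * Real.log ((p : ℝ) - 1) ∧ 0 < Θ 0 := by
  intro Einf J Θ
  have hp3 : (3:ℝ) ≤ (p:ℝ) := by exact_mod_cast hp
  have hppos : (0:ℝ) < p := by linarith
  have hfrac : (0:ℝ) < ((p : ℝ) - 1) / p := div_pos (by linarith) hppos
  have hEpos : 0 < Einf := by
    have := Real.sqrt_pos.2 hfrac
    show (0:ℝ) < 2 * Real.sqrt (((p : ℝ) - 1) / p)
    linarith
  have hE2pos : (0:ℝ) < Einf ^ 2 := pow_pos hEpos 2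
  have hapos : 0 < ((p : ℝ) - 2) / (4 * ((p : ℝ) - 1)) := by
    apply div_pos <;> linarith
  have hJE : J (-Einf) = 0 := by
    show -(-Einf / Einf ^ 2) * Real.sqrt ((-Einf) ^ 2 - Einf ^ 2)
        - Real.log (-(-Einf) + Real.sqrt ((-Einf) ^ 2 - Einf ^ 2)) + Real.log Einf = 0
    rw [neg_sq, sub_self, Real.sqrt_zero]
    ring_nf
  have hargpos : ∀ u ≤ -Einf, 0 < -u + Real.sqrt (u ^ 2 - Einf ^ 2) := by
    intro u hu
    have : 0 ≤ Real.sqrt (u ^ 2 - Einf ^ 2) := Real.sqrt_nonneg _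
    nlinarith
  -- derivative of the first branch
  have hkey : ∀ u < -Einf,
      HasDerivAt (fun x => (1 / 2) * Real.log ((p : ℝ) - 1)
          - (((p : ℝ) - 2) / (4 * ((p : ℝ) - 1))) * x ^ 2 - J x)
        (-(2 * (((p : ℝ) - 2) / (4 * ((p : ℝ) - 1))) * u)
          + 2 * Real.sqrt (u ^ 2 - Einf ^ 2) / Einf ^ 2) u := by
    intro u hu
    have hgt : Einf ^ 2 < u ^ 2 := by nlinarith
    have hgpos : 0 < u ^ 2 - Einf ^ 2 := by linarith
    set v : ℝ := Real.sqrt (u ^ 2 - Einf ^ 2) with hv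
    have hvpos : 0 < v := Real.sqrt_pos.2 hgpos
    have hv2 : v ^ 2 = u ^ 2 - Einf ^ 2 := Real.sq_sqrt hgpos.le
    have hap : 0 < -u + v := hargpos u hu.le
    have hg : HasDerivAt (fun x : ℝ => x ^ 2 - Einf ^ 2) (2 * u) u := by
      simpa using (hasDerivAt_pow 2 u).sub_const (Einf ^ 2)
    have hsd : HasDerivAt (fun x => Real.sqrt (x ^ 2 - Einf ^ 2)) (2 * u / (2 * v)) u :=
      hg.sqrt (ne_of_gt hgpos)
    have ht1 : HasDerivAt (fun x => -(x / Einf ^ 2) * Real.sqrt (x ^ 2 - Einf ^ 2))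
        (-(1 / Einf ^ 2) * v + -(u / Einf ^ 2) * (2 * u / (2 * v))) u := by
      have h0 : HasDerivAt (fun x : ℝ => -(x / Einf ^ 2)) (-(1 / Einf ^ 2)) u := by
        exact ((hasDerivAt_id' u).div_const (Einf ^ 2)).neg
      exact h0.mul hsd
    have harg : HasDerivAt (fun x => -x + Real.sqrt (x ^ 2 - Einf ^ 2))
        (-1 + 2 * u / (2 * v)) u := (hasDerivAt_id u).neg.add hsd
    have ht2 : HasDerivAt (fun x => Real.log (-x + Real.sqrt (x ^ 2 - Einf ^ 2)))
        ((-1 + 2 * u / (2 * v)) / (-u + v)) u := harg.log (ne_of_gt hap)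
    have hJd : HasDerivAt J
        ((-(1 / Einf ^ 2) * v + -(u / Einf ^ 2) * (2 * u / (2 * v)))
          - (-1 + 2 * u / (2 * v)) / (-u + v)) u := (ht1.sub ht2).add_const (Real.log Einf)
    have hq : HasDerivAt (fun x : ℝ => (1 / 2) * Real.log ((p : ℝ) - 1)
          - (((p : ℝ) - 2) / (4 * ((p : ℝ) - 1))) * x ^ 2)
        (-((((p : ℝ) - 2) / (4 * ((p : ℝ) - 1))) * (2 * u))) u := by
      simpa using ((hasDerivAt_pow 2 u).const_mul (((p : ℝ) - 2) / (4 * ((p : ℝ) - 1)))).const_sub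
        ((1 / 2) * Real.log ((p : ℝ) - 1))
    have hD := hq.sub hJd
    have halg : ∀ b e : ℝ, 0 < e →
        -(b * (2 * u)) - ((-(1 / e) * v + -(u / e) * (2 * u / (2 * v)))
          - (-1 + 2 * u / (2 * v)) / (-u + v)) - (-(2 * b * u) + 2 * v / e)
          = (u ^ 2 - (v ^ 2 + e)) / (e * v) := by
      intro b e he
      have he' : e ≠ 0 := ne_of_gt he
      have hv' : v ≠ 0 := ne_of_gt hvpos
      have hav' : -u + v ≠ 0 := ne_of_gt hap
      have e2 : (-1 + 2 * u / (2 * v)) / (-u + v) = -(1 / v) := by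
        rw [div_eq_iff hav']
        field_simp
        ring
      rw [e2]
      field_simp
      ring
    have hzero := halg (((p : ℝ) - 2) / (4 * ((p : ℝ) - 1))) (Einf ^ 2) hE2pos
    rw [show u ^ 2 - (v ^ 2 + Einf ^ 2) = 0 by rw [hv2]; ring, zero_div] at hzero
    have heq : -((((p : ℝ) - 2) / (4 * ((p : ℝ) - 1))) * (2 * u))
          - ((-(1 / Einf ^ 2) * v + -(u / Einf ^ 2) * (2 * u / (2 * v)))
            - (-1 + 2 * u / (2 * v)) / (-u + v))
        = -(2 * (((p : ℝ) - 2) / (4 * ((p : ℝ) - 1))) * u) + 2 * v / Einf ^ 2 := by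
      have : -((((p : ℝ) - 2) / (4 * ((p : ℝ) - 1))) * (2 * u))
          = -((((p : ℝ) - 2) / (4 * ((p : ℝ) - 1))) * (2 * u)) := rfl
      linarith [hzero]
    rw [← heq]
    exact hD
  -- continuity of the first branch
  have hcont : ContinuousOn (fun x => (1 / 2) * Real.log ((p : ℝ) - 1)
      - (((p : ℝ) - 2) / (4 * ((p : ℝ) - 1))) * x ^ 2 - J x) (Iic (-Einf)) := by
    have hsq : Continuous fun x : ℝ => Real.sqrt (x ^ 2 - Einf ^ 2) :=
      Real.continuous_sqrt.comp ((continuous_pow 2).sub continuous_const)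
    have hlog : ContinuousOn (fun x : ℝ => Real.log (-x + Real.sqrt (x ^ 2 - Einf ^ 2)))
        (Iic (-Einf)) :=
      ContinuousOn.log (continuous_neg.add hsq).continuousOn
        (fun x hx => ne_of_gt (hargpos x hx))
    have hJc : ContinuousOn J (Iic (-Einf)) := by
      show ContinuousOn (fun u : ℝ => -(u / Einf ^ 2) * Real.sqrt (u ^ 2 - Einf ^ 2)
        - Real.log (-u + Real.sqrt (u ^ 2 - Einf ^ 2)) + Real.log Einf) (Iic (-Einf))
      apply ContinuousOn.add _ continuousOn_const
      apply ContinuousOn.sub _ hlog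
      exact (((continuous_id.div_const _).neg).mul hsq).continuousOn
    exact (continuousOn_const.sub (continuousOn_const.mul
      ((continuous_pow 2).continuousOn))).sub hJc
  have h1f : MonotoneOn (fun x => (1 / 2) * Real.log ((p : ℝ) - 1)
      - (((p : ℝ) - 2) / (4 * ((p : ℝ) - 1))) * x ^ 2 - J x) (Iic (-Einf)) := by
    apply monotoneOn_of_deriv_nonneg (convex_Iic _) hcont
    · intro x hx
      rw [interior_Iic] at hx
      exact ((hkey x hx).differentiableAt).differentiableWithinAt
    · intro x hx
      rw [interior_Iic] at hx
      rw [(hkey x hx).deriv]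
      have hxneg : x < 0 := lt_trans hx (by linarith)
      have h1 : 0 ≤ -(2 * (((p : ℝ) - 2) / (4 * ((p : ℝ) - 1))) * x) := by
        nlinarith [mul_nonneg hapos.le (neg_nonneg.2 hxneg.le)]
      have h2 : 0 ≤ 2 * Real.sqrt (x ^ 2 - Einf ^ 2) / Einf ^ 2 := by positivity
      linarith
  -- the three monotone pieces for Θ
  have h1 : MonotoneOn Θ (Iic (-Einf)) := by
    apply h1f.congr
    intro u hu
    simp only [Θ, if_pos (mem_Iic.1 hu)]
  have hEqΘ2 : ∀ u ∈ Icc (-Einf) (0:ℝ), Θ u = (1 / 2) * Real.log ((p : ℝ) - 1)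
      - (((p : ℝ) - 2) / (4 * ((p : ℝ) - 1))) * u ^ 2 := by
    intro u hu
    by_cases h : u ≤ -Einf
    · have hue : u = -Einf := le_antisymm h hu.1
      subst hue
      simp only [Θ]
      rw [if_pos (le_refl (-Einf)), hJE]
      ring
    · simp only [Θ, if_neg h, if_pos hu.2]
  have h2 : MonotoneOn Θ (Icc (-Einf) (0:ℝ)) := by
    intro x hx y hy hxy
    rw [hEqΘ2 x hx, hEqΘ2 y hy]
    have hsq : y ^ 2 ≤ x ^ 2 := by nlinarith [hx.2, hy.2]
    have := mul_le_mul_of_nonneg_left hsq hapos.le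
    linarith
  have hEqΘ3 : ∀ u ∈ Ici (0:ℝ), Θ u = (1 / 2) * Real.log ((p : ℝ) - 1) := by
    intro u hu
    have h1' : ¬ u ≤ -Einf := by
      simp only [mem_Ici] at hu; intro h; linarith
    by_cases h : u ≤ 0
    · have hu0 : u = 0 := le_antisymm h hu
      subst hu0
      simp only [Θ]
      rw [if_neg h1', if_pos (le_refl (0:ℝ))]
      ring
    · simp only [Θ, if_neg h1', if_neg h]
  have h3 : MonotoneOn Θ (Ici (0:ℝ)) := by
    intro x hx y hy _
    rw [hEqΘ3 x hx, hEqΘ3 y hy]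
  have hmono : Monotone Θ := glue_mono (by linarith) h1 h2 h3
  have hΘ0 : Θ 0 = (1 / 2) * Real.log ((p : ℝ) - 1) := hEqΘ3 0 self_mem_Ici
  refine ⟨hmono, hΘ0, ?_⟩
  rw [hΘ0]
  have : 0 < Real.log ((p:ℝ) - 1) := Real.log_pos (by linarith)
  linarith
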